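/- For all real p > 0, L_1(p) < r(p) < U_1(p), where U_1(p) = (p/(p+1))^{1/4} and L_1(p) = sqrt(p/(p+1)) · ((p+2)/(p+1))^{1/4}. -/

import Mathlib

noncomputable def r (p : ℝ) : ℝ :=
  Real.Gamma ((p + 1) / 2) / (Real.sqrt (p / 2) * Real.Gamma (p / 2))

open Real Filter

/-- `H z = (Γ(z+1/2)/Γ(z))²`. -/
noncomputable def Haux (z : ℝ) : ℝ := (Real.Gamma (z + 1/2) / Real.Gamma z) ^ 2

lemma Haux_pos {z : ℝ} (hz : 0 < z) : 0 < Haux z := by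
  have h1 := Real.Gamma_pos_of_pos hz
  have h2 := Real.Gamma_pos_of_pos (by linarith : (0:ℝ) < z + 1/2)
  exact pow_pos (div_pos h2 h1) 2

lemma Haux_le {z : ℝ} (hz : 0 < z) : Haux z ≤ z := by
  have h1 := Real.Gamma_pos_of_pos hz
  have h2 := Real.Gamma_pos_of_pos (by linarith : (0:ℝ) < z + 1/2)
  have h3 := Real.Gamma_pos_of_pos (by linarith : (0:ℝ) < z + 1)
  -- midpoint log-convexity
  have hc := Real.convexOn_log_Gamma.2 (Set.mem_Ioi.mpr hz)
    (Set.mem_Ioi.mpr (by linarith : (0:ℝ) < z + 1))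
    (by norm_num : (0:ℝ) ≤ 1/2) (by norm_num : (0:ℝ) ≤ 1/2) (by norm_num)
  simp only [Function.comp, smul_eq_mul] at hc
  have hmid : (1/2 : ℝ) * z + (1/2 : ℝ) * (z+1) = z + 1/2 := by ring
  rw [hmid] at hc
  have hexp : Real.Gamma (z + 1/2) ^ 2 ≤ Real.Gamma z * Real.Gamma (z+1) := by
    have := Real.exp_le_exp.mpr hc
    rw [Real.exp_log h2] at this
    have h2' : Real.Gamma (z + 1/2) ^ 2 ≤
        (Real.exp (1/2 * Real.log (Real.Gamma z) + 1/2 * Real.log (Real.Gamma (z+1)))) ^ 2 :=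
      pow_le_pow_left₀ h2.le this 2
    calc Real.Gamma (z + 1/2) ^ 2 ≤ _ := h2'
      _ = Real.exp (Real.log (Real.Gamma z) + Real.log (Real.Gamma (z+1))) := by
          rw [← Real.exp_nat_mul]; ring_nf
      _ = Real.Gamma z * Real.Gamma (z+1) := by
          rw [Real.exp_add, Real.exp_log h1, Real.exp_log h3]
  have hG1 : Real.Gamma (z + 1) = z * Real.Gamma z := Real.Gamma_add_one hz.ne'
  rw [hG1] at hexp
  rw [Haux, div_pow, div_le_iff₀ (by positivity)]
  nlinarith [sq_nonneg (Real.Gamma z)]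

lemma Haux_fun {z : ℝ} (hz : 0 < z) : Haux z * Haux (z + 1/2) = z ^ 2 := by
  have h1 := (Real.Gamma_pos_of_pos hz).ne'
  have h2 := (Real.Gamma_pos_of_pos (by linarith : (0:ℝ) < z + 1/2)).ne'
  have hG1 : Real.Gamma (z + 1/2 + 1/2) = z * Real.Gamma z := by
    rw [show z + 1/2 + 1/2 = z + 1 by ring, Real.Gamma_add_one hz.ne']
  rw [Haux, Haux, hG1]
  field_simp

lemma Haux_ge {z : ℝ} (hz : 0 < z) : z ^ 2 / (z + 1/2) ≤ Haux z := by
  have h1 := Haux_fun hz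
  have h2 := Haux_le (by linarith : (0:ℝ) < z + 1/2)
  have h3 := Haux_pos (by linarith : (0:ℝ) < z + 1/2)
  rw [div_le_iff₀ (by linarith)]
  nlinarith [Haux_pos hz]

lemma Haux_step {z : ℝ} (hz : 0 < z) : Haux (z + 1) = Haux z * (z + 1/2)^2 / z^2 := by
  have h1 := Haux_fun hz
  have h2 := Haux_fun (by linarith : (0:ℝ) < z + 1/2)
  have h3 := Haux_pos (by linarith : (0:ℝ) < z + 1/2)
  rw [show z + 1/2 + 1/2 = z + 1 by ring] at h2
  have hz2 : z^2 ≠ 0 := by positivity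
  field_simp
  nlinarith [Haux_pos hz]

/-- `v z = H(z)² (z+1/2)/z³`; we show `v z < 1`. -/
noncomputable def vaux (z : ℝ) : ℝ := (Haux z)^2 * (z + 1/2) / z^3

lemma vaux_step {z : ℝ} (hz : 0 < z) : vaux z < vaux (z + 1) := by
  have hH := Haux_pos hz
  rw [vaux, vaux, Haux_step hz]
  rw [div_lt_div_iff₀ (by positivity) (by positivity)]
  have key : z * (z+1)^3 < (z + 1/2)^3 * (z + 3/2) := by nlinarith
  have e1 : (Haux z * (z + 1/2) ^ 2 / z ^ 2) ^ 2 = Haux z ^2 * (z+1/2)^4 / z^4 := by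
    field_simp
  rw [e1]
  have hz4 : (0:ℝ) < z^4 := by positivity
  rw [div_mul_eq_mul_div, div_mul_eq_mul_div, lt_div_iff₀ hz4]
  have expand : (z + 1 + 1/2) = z + 3/2 := by ring
  rw [expand]
  nlinarith [pow_pos hH 2, sq_nonneg (Haux z), mul_pos (pow_pos hH 2) hz]

lemma vaux_lb {z : ℝ} (hz : 0 < z) : z / (z + 1/2) ≤ vaux z := by
  have h1 := Haux_ge hz
  have h2 : (0:ℝ) < z + 1/2 := by linarith
  have h3 : (z^2/(z+1/2))^2 ≤ (Haux z)^2 :=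
    pow_le_pow_left₀ (by positivity) h1 2
  rw [vaux, le_div_iff₀ (by positivity)]
  rw [div_pow] at h3
  have : z / (z + 1/2) * z ^ 3 = (z^2)^2/(z+1/2)^2 * (z+1/2) := by
    field_simp
  rw [this]
  exact mul_le_mul_of_nonneg_right h3 h2.le

lemma vaux_ub {z : ℝ} (hz : 0 < z) : vaux z ≤ (z + 1/2) / z := by
  have h1 := Haux_le hz
  have h3 : (Haux z)^2 ≤ z^2 := pow_le_pow_left₀ (Haux_pos hz).le h1 2
  rw [vaux, div_le_div_iff₀ (by positivity) hz]
  have h2 : (0:ℝ) < z + 1/2 := by linarith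
  nlinarith

lemma vaux_lt_one {x : ℝ} (hx : 0 < x) : vaux x < 1 := by
  -- the sequence n ↦ vaux (x + 1 + n) is monotone and tends to 1
  set f : ℕ → ℝ := fun n => vaux (x + 1 + n) with hf
  have hpos : ∀ n : ℕ, (0:ℝ) < x + 1 + n := fun n => by positivity
  have hmono : Monotone f := by
    apply monotone_nat_of_le_succ
    intro n
    have := vaux_step (hpos n)
    simp only [hf]
    push_cast
    have e : x + 1 + (n + 1 : ℝ) = (x + 1 + n) + 1 := by ring
    rw [e]
    exact this.le
  have htend : Tendsto f atTop (nhds 1) := by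
    have hT : Tendsto (fun n : ℕ => x + 1 + (n:ℝ)) atTop atTop :=
      tendsto_atTop_add_const_left _ _ tendsto_natCast_atTop_atTop
    have hT2 : Tendsto (fun n : ℕ => x + 1 + (n:ℝ) + 1/2) atTop atTop :=
      tendsto_atTop_add_const_right _ _ hT
    have hinv : Tendsto (fun n : ℕ => (x + 1 + (n:ℝ) + 1/2)⁻¹) atTop (nhds 0) :=
      hT2.inv_tendsto_atTop
    have hinv2 : Tendsto (fun n : ℕ => (x + 1 + (n:ℝ))⁻¹) atTop (nhds 0) :=
      hT.inv_tendsto_atTop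
    have hlo : Tendsto (fun n : ℕ => (x + 1 + (n:ℝ)) / (x + 1 + n + 1/2)) atTop (nhds 1) := by
      have : Tendsto (fun n : ℕ => 1 - (1/2) * (x + 1 + (n:ℝ) + 1/2)⁻¹) atTop (nhds 1) := by
        have h := (tendsto_const_nhds :
            Tendsto (fun _ : ℕ => (1:ℝ)) atTop (nhds 1)).sub (hinv.const_mul (1/2 : ℝ))
        simpa using h
      refine this.congr fun n => ?_
      have h0 : x + 1 + (n:ℝ) + 1/2 ≠ 0 := by positivity
      field_simp
      ring
    have hhi : Tendsto (fun n : ℕ => (x + 1 + (n:ℝ) + 1/2) / (x + 1 + n)) atTop (nhds 1) := by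
      have : Tendsto (fun n : ℕ => 1 + (1/2) * (x + 1 + (n:ℝ))⁻¹) atTop (nhds 1) := by
        have h := (tendsto_const_nhds :
            Tendsto (fun _ : ℕ => (1:ℝ)) atTop (nhds 1)).add (hinv2.const_mul (1/2 : ℝ))
        simpa using h
      refine this.congr fun n => ?_
      have h0 : x + 1 + (n:ℝ) ≠ 0 := (hpos n).ne'
      field_simp
    exact tendsto_of_tendsto_of_tendsto_of_le_of_le hlo hhi
      (fun n => vaux_lb (hpos n)) (fun n => vaux_ub (hpos n))
  have h1 : f 0 ≤ 1 := hmono.ge_of_tendsto htend 0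
  have h2 : vaux x < vaux (x + 1) := vaux_step hx
  have h3 : vaux (x + 1) = f 0 := by simp [hf]
  linarith

lemma Haux_lt {z : ℝ} (hz : 0 < z) : Haux z < z * Real.sqrt (z / (z + 1/2)) := by
  have hv := vaux_lt_one hz
  have h2 : (0:ℝ) < z + 1/2 := by linarith
  have hsq : Haux z ^ 2 < z^3 / (z + 1/2) := by
    rw [vaux, div_lt_one (by positivity)] at hv
    rw [lt_div_iff₀ h2]
    linarith
  have : Haux z < Real.sqrt (z^3 / (z + 1/2)) :=
    Real.lt_sqrt_of_sq_lt hsq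
  calc Haux z < Real.sqrt (z^3 / (z + 1/2)) := this
    _ = z * Real.sqrt (z / (z + 1/2)) := by
        rw [show z^3/(z+1/2) = z^2 * (z/(z+1/2)) by field_simp,
          Real.sqrt_mul (by positivity), Real.sqrt_sq hz.le]

lemma r_pos {p : ℝ} (hp : 0 < p) : 0 < r p := by
  have h1 := Real.Gamma_pos_of_pos (by linarith : (0:ℝ) < (p+1)/2)
  have h2 := Real.Gamma_pos_of_pos (by linarith : (0:ℝ) < p/2)
  have h3 : (0:ℝ) < Real.sqrt (p/2) := Real.sqrt_pos.mpr (by linarith)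
  exact div_pos h1 (mul_pos h3 h2)

lemma r_sq {p : ℝ} (hp : 0 < p) : r p ^ 2 = Haux (p/2) / (p/2) := by
  have h2 := (Real.Gamma_pos_of_pos (by linarith : (0:ℝ) < p/2)).ne'
  have hs : Real.sqrt (p/2) ^ 2 = p/2 := Real.sq_sqrt (by linarith)
  rw [r, Haux, show p/2 + 1/2 = (p+1)/2 by ring, div_pow, div_pow, mul_pow, hs]
  have hp0 : p ≠ 0 := hp.ne'
  field_simp

lemma r_sq_lt {p : ℝ} (hp : 0 < p) : r p ^ 2 < Real.sqrt (p / (p+1)) := by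
  have hz : (0:ℝ) < p/2 := by linarith
  have h := Haux_lt hz
  rw [r_sq hp, div_lt_iff₀ hz] at *
  have hp1 : p + 1 ≠ 0 := by linarith
  have e : p/2 / (p/2 + 1/2) = p / (p+1) := by
    rw [show p/2 + 1/2 = (p+1)/2 by ring]
    field_simp
  rw [e] at h
  rw [mul_comm]
  exact h

lemma r_upper {p : ℝ} (hp : 0 < p) : r p < (p / (p+1)) ^ ((1:ℝ)/4) := by
  have h := r_sq_lt hp
  have hr := r_pos hp
  have h1 : r p < Real.sqrt (Real.sqrt (p/(p+1))) := Real.lt_sqrt_of_sq_lt h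
  have ha : (0:ℝ) ≤ p/(p+1) := by positivity
  calc r p < Real.sqrt (Real.sqrt (p/(p+1))) := h1
    _ = (p/(p+1)) ^ ((1:ℝ)/4) := by
        rw [Real.sqrt_eq_rpow, Real.sqrt_eq_rpow, ← Real.rpow_mul ha]
        norm_num

lemma r_identity {p : ℝ} (hp : 0 < p) : r p * r (p+1) = Real.sqrt (p/(p+1)) := by
  have h1 := (Real.Gamma_pos_of_pos (by linarith : (0:ℝ) < (p+1)/2)).ne'
  have h2 := (Real.Gamma_pos_of_pos (by linarith : (0:ℝ) < p/2)).ne'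
  have hs1 : (0:ℝ) < Real.sqrt (p/2) := Real.sqrt_pos.mpr (by linarith)
  have hs2 : (0:ℝ) < Real.sqrt ((p+1)/2) := Real.sqrt_pos.mpr (by linarith)
  have hG : Real.Gamma ((p+1+1)/2) = (p/2) * Real.Gamma (p/2) := by
    rw [show (p+1+1)/2 = p/2 + 1 by ring, Real.Gamma_add_one (by positivity)]
  have hp1 : p + 1 ≠ 0 := by linarith
  rw [r, r, hG]
  have hrhs : Real.sqrt (p/(p+1)) = Real.sqrt (p/2) / Real.sqrt ((p+1)/2) := by
    rw [← Real.sqrt_div (by linarith)]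
    congr 1
    field_simp
  have hms : Real.sqrt (p/2) * Real.sqrt (p/2) = p/2 := Real.mul_self_sqrt (by linarith)
  have hΓ1 := Real.Gamma_pos_of_pos (by linarith : (0:ℝ) < (p+1)/2)
  have hΓ2 := Real.Gamma_pos_of_pos (by linarith : (0:ℝ) < p/2)
  rw [div_mul_div_comm, hrhs,
    div_eq_div_iff (by positivity) (by positivity : (0:ℝ) < Real.sqrt ((p+1)/2)).ne']
  linear_combination (-1 * Real.Gamma ((p+1)/2) * Real.Gamma (p/2) * Real.sqrt ((p+1)/2)) * hms

theorem L1_lt_r_lt_U1 (p : ℝ) (hp : 0 < p) :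
    Real.sqrt (p / (p + 1)) * ((p + 2) / (p + 1)) ^ ((1 : ℝ) / 4) < r p ∧
    r p < (p / (p + 1)) ^ ((1 : ℝ) / 4) := by
  refine ⟨?_, r_upper hp⟩
  have hid := r_identity hp
  have hup : r (p+1) < ((p+1)/(p+2)) ^ ((1:ℝ)/4) := by
    have := r_upper (by linarith : (0:ℝ) < p+1)
    rwa [show p+1+1 = p+2 by ring] at this
  have hBpos : (0:ℝ) < ((p+2)/(p+1)) ^ ((1:ℝ)/4) :=
    Real.rpow_pos_of_pos (by positivity) _
  have hB'pos : (0:ℝ) < ((p+1)/(p+2)) ^ ((1:ℝ)/4) :=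
    Real.rpow_pos_of_pos (by positivity) _
  have hBB : ((p+1)/(p+2)) ^ ((1:ℝ)/4) * ((p+2)/(p+1)) ^ ((1:ℝ)/4) = 1 := by
    rw [← Real.mul_rpow (by positivity) (by positivity)]
    rw [show (p+1)/(p+2) * ((p+2)/(p+1)) = 1 by field_simp]
    exact Real.one_rpow _
  have hr1 := r_pos (by linarith : (0:ℝ) < p+1)
  have hrp := r_pos hp
  -- r(p+1) * B' < B * B' = 1
  have key : r (p+1) * ((p+2)/(p+1)) ^ ((1:ℝ)/4) < 1 := by
    calc r (p+1) * ((p+2)/(p+1)) ^ ((1:ℝ)/4)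
        < ((p+1)/(p+2)) ^ ((1:ℝ)/4) * ((p+2)/(p+1)) ^ ((1:ℝ)/4) :=
          mul_lt_mul_of_pos_right hup hBpos
      _ = 1 := hBB
  calc Real.sqrt (p/(p+1)) * ((p+2)/(p+1)) ^ ((1:ℝ)/4)
      = r p * (r (p+1) * ((p+2)/(p+1)) ^ ((1:ℝ)/4)) := by rw [← hid]; ring
    _ < r p * 1 := mul_lt_mul_of_pos_left key hrp
    _ = r p := mul_one _
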